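/- For positive integers m ≥ 3 and k, the odd girth of the helical graph H(m,1,k) equals 2k + 2⌈(2k−1)/(m−2)⌉ − 1. -/

import Mathlib

structure OGraph where
  V : Type
  Adj : V → V → Prop
  symm : ∀ u v, Adj u v → Adj v u

namespace OGraph

/-- There is a walk of length exactly `n` from `u` to `v`. -/
def walkLen (G : OGraph) : ℕ → G.V → G.V → Prop
  | 0, u, v => u = v
  | n+1, u, v => ∃ w, G.Adj u w ∧ G.walkLen n w v

theorem walkLen_concat (G : OGraph) : ∀ (n : ℕ) (u v w : G.V),
    G.walkLen n u v → G.Adj v w → G.walkLen (n+1) u w := by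
  intro n
  induction n with
  | zero =>
      intro u v w h hadj
      cases h
      exact ⟨w, hadj, rfl⟩
  | succ n ih =>
      rintro u v w ⟨x, hux, hxv⟩ hadj
      exact ⟨x, hux, ih x v w hxv hadj⟩

theorem walkLen_symm (G : OGraph) : ∀ (n : ℕ) (u v : G.V),
    G.walkLen n u v → G.walkLen n v u := by
  intro n
  induction n with
  | zero => intro u v h; exact h.symm
  | succ n ih =>
      rintro u v ⟨w, huw, hwv⟩
      exact G.walkLen_concat n v w u (ih w v hwv) (G.symm u w huw)

/-- The `k`-th power of a graph: same vertices, adjacency = existence of a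
walk of length exactly `k` (loops allowed). -/
def pow (G : OGraph) (k : ℕ) : OGraph where
  V := G.V
  Adj u v := G.walkLen k u v
  symm := G.walkLen_symm k

/-- Existence of a graph homomorphism. -/
def homTo (G H : OGraph) : Prop :=
  ∃ f : G.V → H.V, ∀ u v, G.Adj u v → H.Adj (f u) (f v)

/-- The `(2s+1)`-subdivision `S_{2s+1}(G)`: every edge is replaced by a path
of length `2s+1`.  Following the paper's notation, the ordered pair `(u,v)`
(with `u ~ v`) carries the `s` inner vertices `(uv)_1, …, (uv)_s`. -/
def subdiv (G : OGraph) (s : ℕ) : OGraph where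
  V := G.V ⊕ ({p : G.V × G.V // G.Adj p.1 p.2} × Fin s)
  Adj x y :=
    match x, y with
    | Sum.inl u, Sum.inl v => s = 0 ∧ G.Adj u v
    | Sum.inl u, Sum.inr (e, k) => u = e.1.2 ∧ (k : ℕ) = s - 1
    | Sum.inr (e, k), Sum.inl u => u = e.1.2 ∧ (k : ℕ) = s - 1
    | Sum.inr (e, k), Sum.inr (e', l) =>
        e'.1.1 = e.1.2 ∧ e'.1.2 = e.1.1 ∧
        ((k : ℕ) + (l : ℕ) + 2 = s ∨ (k : ℕ) + (l : ℕ) + 2 = s + 1)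
  symm := by
    rintro (u | ⟨e, k⟩) (v | ⟨e', l⟩) h
    · exact ⟨h.1, G.symm _ _ h.2⟩
    · exact h
    · exact h
    · obtain ⟨h1, h2, h3⟩ := h
      exact ⟨h2.symm, h1.symm, by omega⟩

/-- `q < og(G)`: the rational `q` is smaller than the odd girth of `G`
(the length of a shortest odd closed walk; vacuously true if `G` is bipartite). -/
def ltOddGirth (G : OGraph) (q : ℚ) : Prop :=
  ∀ n : ℕ, Odd n → (∃ v, G.walkLen n v v) → q < (n : ℚ)

/-- A graph is non-bipartite iff it contains an odd closed walk. -/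
def Nonbipartite (G : OGraph) : Prop :=
  ∃ (n : ℕ) (v : G.V), Odd n ∧ G.walkLen n v v

/-- The odd girth, as an extended natural number (`⊤` for bipartite graphs). -/
noncomputable def oddGirth (G : OGraph) : ℕ∞ :=
  sInf {N : ℕ∞ | ∃ n : ℕ, N = (n : ℕ∞) ∧ Odd n ∧ ∃ v, G.walkLen n v v}

/-- The complete graph on `m` vertices. -/
def completeGraph (m : ℕ) : OGraph :=
  ⟨Fin m, fun u v => u ≠ v, fun _ _ h => h.symm⟩

/-- The chromatic number: least `m` such that `G` maps homomorphically to `K_m`. -/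
noncomputable def chromatic (G : OGraph) : ℕ :=
  sInf {m : ℕ | G.homTo (completeGraph m)}

/-- The `i`-th power thickness
`θ_i(G) = sup { (2r+1)/(2s+1) | χ(G^{(2r+1)/(2s+1)}) ≤ χ(G)+i, (2r+1)/(2s+1) < og(G) }`. -/
noncomputable def powerThickness (G : OGraph) (i : ℤ) : ℝ :=
  sSup {x : ℝ | ∃ r s : ℕ, x = (2*(r:ℝ)+1)/(2*(s:ℝ)+1) ∧
    ((((G.subdiv s).pow (2*r+1)).chromatic : ℤ) ≤ (G.chromatic : ℤ) + i) ∧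
    G.ltOddGirth ((2*(r:ℚ)+1)/(2*(s:ℚ)+1))}

/-- The graph `H^{-1/(2r+1)}`. -/
def negPow (H : OGraph) (r : ℕ) : OGraph where
  V := {A : Fin (r+1) → Set H.V //
        (∃ v, A 0 = {v}) ∧
        ∀ i : Fin (r+1), (A i).Nonempty ∧ A i ⊆ {u | ∃ v ∈ A 0, H.walkLen i v u}}
  Adj A B :=
    (∀ i j : Fin (r+1), (j : ℕ) = (i : ℕ) + 1 → A.1 i ⊆ B.1 j ∧ B.1 i ⊆ A.1 j) ∧
    ∀ j : Fin (r+1), ∀ a ∈ A.1 j, ∀ b ∈ B.1 j, H.Adj a b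
  symm := by
    rintro A B ⟨h1, h2⟩
    exact ⟨fun i j hij => ⟨(h1 i j hij).2, (h1 i j hij).1⟩,
           fun j b hb a ha => H.symm _ _ (h2 j a ha b hb)⟩

/-- The circular complete graph `K_{n/d}`. -/
def circGraph (n d : ℕ) : OGraph where
  V := Fin n
  Adj u v := (d : ℤ) ≤ |(u : ℤ) - (v : ℤ)| ∧ |(u : ℤ) - (v : ℤ)| ≤ (n : ℤ) - d
  symm := by
    intro u v h
    rwa [abs_sub_comm]

/-- The circular chromatic number, as a real number. -/
noncomputable def circChrom (G : OGraph) : ℝ :=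
  sInf {x : ℝ | ∃ n d : ℕ, 0 < d ∧ 2 * d ≤ n ∧ Nat.gcd n d = 1 ∧
    x = (n : ℝ) / (d : ℝ) ∧ G.homTo (circGraph n d)}

/-- The cycle on `m` vertices. -/
def cycleGraph (m : ℕ) : OGraph :=
  ⟨ZMod m, fun i j => i = j + 1 ∨ j = i + 1, fun _ _ h => h.symm⟩

/-- Graph isomorphism. -/
def Isom (G H : OGraph) : Prop :=
  ∃ f : G.V ≃ H.V, ∀ u v, G.Adj u v ↔ H.Adj (f u) (f v)

/-- The helical graph `H(m,n,k)`. -/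
def helical (m n k : ℕ) : OGraph where
  V := {A : Fin k → Set (Fin m) //
        (∀ h : 0 < k, (A ⟨0, h⟩).ncard = n) ∧
        (∀ i, n ≤ (A i).ncard) ∧
        (∀ i : Fin k, ∀ h : (i : ℕ) + 1 < k, A i ∩ A ⟨(i : ℕ) + 1, h⟩ = ∅) ∧
        (∀ i : Fin k, ∀ h : (i : ℕ) + 2 < k, A i ⊆ A ⟨(i : ℕ) + 2, h⟩)}
  Adj A B :=
    (∀ i, A.1 i ∩ B.1 i = ∅) ∧
    (∀ i : Fin k, ∀ h : (i : ℕ) + 1 < k,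
      A.1 i ⊆ B.1 ⟨(i : ℕ) + 1, h⟩ ∧ B.1 i ⊆ A.1 ⟨(i : ℕ) + 1, h⟩)
  symm := by
    rintro A B ⟨h1, h2⟩
    refine ⟨fun i => ?_, fun i h => ⟨(h2 i h).2, (h2 i h).1⟩⟩
    rw [Set.inter_comm]
    exact h1 i

/-- A graph with chromatic number `k` is colorful if every proper `k`-coloring
admits a (nonempty) induced subgraph all of whose vertices see all `k` colors in
their closed neighborhood. -/
def Colorful (G : OGraph) : Prop :=
  ∀ c : G.V → Fin G.chromatic, (∀ u v, G.Adj u v → c u ≠ c v) →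
    ∃ S : Set G.V, S.Nonempty ∧
      ∀ v ∈ S, ∀ col : Fin G.chromatic,
        ∃ u ∈ S, (u = v ∨ G.Adj v u) ∧ c u = col

end OGraph

open OGraph
namespace OGraph

theorem walkLen_split (G : OGraph) : ∀ (s r : ℕ) (u v : G.V),
    G.walkLen (s + r) u v → ∃ w, G.walkLen s u w ∧ G.walkLen r w v := by
  intro s
  induction s with
  | zero =>
      intro r u v h
      rw [Nat.zero_add] at h
      exact ⟨u, rfl, h⟩
  | succ s ih =>
      intro r u v h
      rw [show s + 1 + r = (s + r) + 1 from by omega] at h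
      obtain ⟨x, hux, hxv⟩ := h
      obtain ⟨w, h1, h2⟩ := ih r x v hxv
      exact ⟨w, ⟨x, hux, h1⟩, h2⟩

theorem walkLen_append (G : OGraph) : ∀ (s r : ℕ) (u w v : G.V),
    G.walkLen s u w → G.walkLen r w v → G.walkLen (s + r) u v := by
  intro s
  induction s with
  | zero =>
      intro r u w v h1 h2
      rw [Nat.zero_add]
      obtain rfl := h1
      exact h2
  | succ s ih =>
      intro r u w v h1 h2
      obtain ⟨x, hux, hxw⟩ := h1
      rw [show s + 1 + r = (s + r) + 1 from by omega]
      exact ⟨x, hux, ih r x w v hxw h2⟩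

theorem exists_walk_fun (G : OGraph) : ∀ (L : ℕ) (u v : G.V), G.walkLen L u v →
    ∃ W : ℕ → G.V, W 0 = u ∧ W L = v ∧ ∀ i, i < L → G.Adj (W i) (W (i+1)) := by
  intro L
  induction L with
  | zero =>
      intro u v h
      obtain rfl := h
      exact ⟨fun _ => u, rfl, rfl, by omega⟩
  | succ L ih =>
      intro u v h
      obtain ⟨x, hux, hxv⟩ := h
      obtain ⟨W, hW0, hWL, hadj⟩ := ih x v hxv
      refine ⟨fun i => if i = 0 then u else W (i - 1), by simp, by simp [hWL], ?_⟩
      intro i hi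
      rcases Nat.eq_zero_or_pos i with rfl | hpos
      · simpa [hW0] using hux
      · have h1 : i ≠ 0 := by omega
        have := hadj (i-1) (by omega)
        rw [show i - 1 + 1 = i from by omega] at this
        simpa [h1] using this

theorem walkLen_of_fun (G : OGraph) (W : ℕ → G.V) (L : ℕ)
    (hadj : ∀ i, i < L → G.Adj (W i) (W (i+1))) :
    ∀ (d i : ℕ), i + d ≤ L → G.walkLen d (W i) (W (i + d)) := by
  intro d
  induction d with
  | zero => intro i _; rfl
  | succ d ih =>
      intro i hi
      refine ⟨W (i+1), hadj i (by omega), ?_⟩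
      have := ih (i+1) (by omega)
      rw [show i + 1 + d = i + (d + 1) from by omega] at this
      exact this

theorem helical_chain (m k : ℕ) : ∀ (t j : ℕ) (h : j + t < k)
    (u u' : (helical m 1 k).V), (helical m 1 k).walkLen t u u' →
    u.1 ⟨j, by omega⟩ ⊆ u'.1 ⟨j + t, h⟩ := by
  intro t
  induction t with
  | zero =>
      intro j h u u' hw
      obtain rfl := hw
      exact subset_rfl
  | succ t ih =>
      intro j h u u' hw
      obtain ⟨w, hadj, hw'⟩ := hw
      have h1 : j + 1 < k := by omega
      have step : u.1 ⟨j, by omega⟩ ⊆ w.1 ⟨j + 1, h1⟩ := (hadj.2 ⟨j, by omega⟩ h1).1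
      have rest : w.1 ⟨j + 1, h1⟩ ⊆ u'.1 ⟨j + 1 + t, by omega⟩ :=
        ih (j+1) (by omega) w u' hw'
      have heq : (⟨j + 1 + t, by omega⟩ : Fin k) = ⟨j + (t+1), h⟩ := by
        apply Fin.mk_eq_mk.mpr; omega
      rw [heq] at rest
      exact step.trans rest

end OGraph
/-- The circular coloring used to build the closed walk in the helical graph. -/
def hcol (k c i : ℕ) : ℕ := ((k - 1 + c + 1) * i) % (2*(k-1+c)+1) / c

lemma hcol_lt (m k c : ℕ) (hm : 3 ≤ m) (hk : 1 ≤ k) (hc : 1 ≤ c)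
    (hc1 : 2*k-1 ≤ (m-2)*c) (i : ℕ) : hcol k c i < m := by
  unfold hcol
  set N := k - 1 + c with hN
  have hgpos : 0 < 2*N+1 := by omega
  have h1 : ((N+1) * i) % (2*N+1) < 2*N+1 := Nat.mod_lt _ hgpos
  rw [Nat.div_lt_iff_lt_mul (by omega : 0 < c)]
  have h2 : (m-2)*c + 2*c = m*c := by rw [← Nat.add_mul]; congr 1; omega
  have h3 : m * c = c * m := Nat.mul_comm _ _
  omega

lemma hcol_per (k c x : ℕ) : hcol k c (x + (2*(k-1+c)+1)) = hcol k c x := by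
  unfold hcol
  rw [Nat.mul_add, Nat.add_mul_mod_self_right]

lemma hcol_ne (k c : ℕ) (hk : 1 ≤ k) (hc : 1 ≤ c)
    (p d : ℕ) (hd : d % 2 = 1) (hd2 : d ≤ 2*k-1) :
    hcol k c p ≠ hcol k c (p + d) := by
  unfold hcol
  set N := k - 1 + c with hN
  set g := 2*N+1 with hg
  have hgpos : 0 < g := by omega
  set t := d / 2 with htdef
  have htk : t ≤ k - 1 := by omega
  have hNd : (N+1) * d = g * t + (t + N + 1) := by
    rw [show d = 2*t+1 from by omega, hg]; ring
  have e : ((N+1)*d) % g = t + N + 1 := by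
    rw [hNd, Nat.mul_add_mod]
    exact Nat.mod_eq_of_lt (by omega)
  have hx : ((N+1)*(p+d)) % g = (((N+1)*p) % g + (t+N+1)) % g := by
    rw [Nat.mul_add, Nat.add_mod, e]
  set x := ((N+1)*p) % g with hxdef
  set y := ((N+1)*(p+d)) % g with hydef
  have hxg : x < g := Nat.mod_lt _ hgpos
  have hyg : y < g := Nat.mod_lt _ hgpos
  have hy : y = x + (t+N+1) ∨ y + g = x + (t+N+1) := by
    rcases Nat.lt_or_ge (x + (t+N+1)) g with h | h
    · left; rw [hx]; exact Nat.mod_eq_of_lt h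
    · right; rw [hx, Nat.mod_eq_sub_mod h, Nat.mod_eq_of_lt (by omega)]; omega
  intro hEq
  have d1 := Nat.div_add_mod x c
  have d2 := Nat.div_add_mod y c
  have m1 : x % c < c := Nat.mod_lt _ (by omega)
  have m2 : y % c < c := Nat.mod_lt _ (by omega)
  rw [hEq] at d1
  omega

/-- The coloring as a function into `Fin m`. -/
def colF (m k c : ℕ) (hm : 0 < m) (i : ℕ) : Fin m := ⟨hcol k c i % m, Nat.mod_lt _ hm⟩

lemma colF_per (m k c : ℕ) (hm : 0 < m) (x : ℕ) :
    colF m k c hm (x + (2*(k-1+c)+1)) = colF m k c hm x := by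
  unfold colF
  congr 1
  rw [hcol_per]

lemma colF_ne_wrap (m k c : ℕ) (hm : 3 ≤ m) (hk : 1 ≤ k) (hc : 1 ≤ c)
    (hc1 : 2*k-1 ≤ (m-2)*c) (hm0 : 0 < m) (p q : ℕ) (hpar : (p+q) % 2 = 1)
    (h1 : p ≤ q → q - p ≤ 2*k-1) (h2 : q ≤ p → p - q ≤ 2*k-1) :
    colF m k c hm0 p ≠ colF m k c hm0 q := by
  have key : ∀ a b : ℕ, a < b → (b - a) % 2 = 1 → b - a ≤ 2*k-1 →
      colF m k c hm0 a ≠ colF m k c hm0 b := by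
    intro a b hab hp hle hEq
    have hval : hcol k c a % m = hcol k c b % m := congrArg Fin.val hEq
    rw [Nat.mod_eq_of_lt (hcol_lt m k c hm hk hc hc1 a),
        Nat.mod_eq_of_lt (hcol_lt m k c hm hk hc hc1 b)] at hval
    have := hcol_ne k c hk hc a (b - a) hp hle
    rw [show a + (b - a) = b from by omega] at this
    exact this hval
  rcases Nat.lt_trichotomy p q with h | h | h
  · exact key p q h (by omega) (h1 (by omega))
  · omega
  · exact fun hEq => key q p h (by omega) (h2 (by omega)) hEq.symm
open OGraph

/-- The tuple of sets forming a vertex of the helical graph along the walk. -/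
def helVert (m k c : ℕ) (hm : 0 < m) (i : ℕ) : Fin k → Set (Fin m) :=
  fun j => {z | ∃ r, r ≤ (j : ℕ) ∧ z = colF m k c hm (i + (2*(k-1+c)+1) - (j:ℕ) + 2*r)}

theorem helical_upper (m k c : ℕ) (hm : 3 ≤ m) (hk : 1 ≤ k) (hc : 1 ≤ c)
    (hc1 : 2*k-1 ≤ (m-2)*c) :
    ∃ v, (helical m 1 k).walkLen (2*k + 2*c - 1) v v := by
  have hm0 : 0 < m := by omega
  set g := 2*(k-1+c)+1 with hg
  have hkg : k ≤ g := by omega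
  have wrap := colF_ne_wrap m k c hm hk hc hc1 hm0
  -- the four vertex conditions
  have hprop : ∀ i : ℕ,
      (∀ h : 0 < k, ((helVert m k c hm0 i) ⟨0, h⟩).ncard = 1) ∧
      (∀ j, 1 ≤ ((helVert m k c hm0 i) j).ncard) ∧
      (∀ (j : Fin k) (h : (j:ℕ) + 1 < k),
        (helVert m k c hm0 i) j ∩ (helVert m k c hm0 i) ⟨(j:ℕ)+1, h⟩ = ∅) ∧
      (∀ (j : Fin k) (h : (j:ℕ) + 2 < k),
        (helVert m k c hm0 i) j ⊆ (helVert m k c hm0 i) ⟨(j:ℕ)+2, h⟩) := by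
    intro i
    refine ⟨?_, ?_, ?_, ?_⟩
    · intro h
      have hset : (helVert m k c hm0 i) ⟨0, h⟩ = {colF m k c hm0 (i + g)} := by
        ext z
        simp only [helVert, Set.mem_setOf_eq, Set.mem_singleton_iff, ← hg]
        constructor
        · rintro ⟨r, hr, rfl⟩
          have hr0 : r = 0 := by omega
          subst hr0
          exact congrArg _ (by omega)
        · rintro rfl
          exact ⟨0, le_refl 0, (congrArg _ (by omega)).symm⟩
      rw [hset]
      exact Set.ncard_singleton _
    · intro j
      refine (Set.ncard_pos (Set.toFinite _)).mpr ?_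
      exact ⟨colF m k c hm0 (i + g - (j:ℕ) + 2*0), 0, Nat.zero_le _, rfl⟩
    · intro j h
      rw [Set.eq_empty_iff_forall_notMem]
      rintro z ⟨⟨r, hr, rfl⟩, ⟨r', hr', hEq⟩⟩
      simp only [helVert, ← hg] at hEq
      have hjk : (j:ℕ) < k := j.2
      refine wrap _ _ (by omega) (fun _ => by omega) (fun _ => by omega) hEq
    · intro j h
      rintro z ⟨r, hr, rfl⟩
      exact ⟨r+1, show r+1 ≤ (j:ℕ)+2 from by omega,
        congrArg _ (show i + g - (j:ℕ) + 2*r = i + g - ((j:ℕ)+2) + 2*(r+1) from by omega)⟩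
  let VV : ℕ → (helical m 1 k).V := fun i => ⟨helVert m k c hm0 i, hprop i⟩
  have hadjVV : ∀ i : ℕ, (helical m 1 k).Adj (VV i) (VV (i+1)) := by
    intro i
    constructor
    · intro j
      rw [Set.eq_empty_iff_forall_notMem]
      rintro z ⟨⟨r, hr, rfl⟩, ⟨r', hr', hEq⟩⟩
      simp only [helVert, ← hg] at hEq
      have hjk : (j:ℕ) < k := j.2
      refine wrap _ _ (by omega) (fun _ => by omega) (fun _ => by omega) hEq
    · intro j h
      constructor
      · rintro z ⟨r, hr, rfl⟩
        exact ⟨r, show r ≤ (j:ℕ)+1 from by omega,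
          congrArg _ (show i + g - (j:ℕ) + 2*r = (i+1) + g - ((j:ℕ)+1) + 2*r from by omega)⟩
      · rintro z ⟨r, hr, rfl⟩
        exact ⟨r+1, show r+1 ≤ (j:ℕ)+1 from by omega,
          congrArg _ (show (i+1) + g - (j:ℕ) + 2*r = i + g - ((j:ℕ)+1) + 2*(r+1) from by omega)⟩
  have hwalk : ∀ (s i : ℕ), (helical m 1 k).walkLen s (VV i) (VV (i+s)) := by
    intro s
    induction s with
    | zero => intro i; rfl
    | succ s ih =>
        intro i
        refine ⟨VV (i+1), hadjVV i, ?_⟩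
        have := ih (i+1)
        rw [show i + 1 + s = i + (s + 1) from by omega] at this
        exact this
  have hVVg : VV g = VV 0 := by
    apply Subtype.ext
    funext j
    ext z
    simp only [VV, helVert, Set.mem_setOf_eq, ← hg]
    constructor
    · rintro ⟨r, hr, rfl⟩
      refine ⟨r, hr, ?_⟩
      rw [show g + g - (j:ℕ) + 2*r = (0 + g - (j:ℕ) + 2*r) + g from by omega]
      rw [colF_per m k c hm0 (0 + g - (j:ℕ) + 2*r)]
    · rintro ⟨r, hr, rfl⟩
      refine ⟨r, hr, ?_⟩
      rw [show g + g - (j:ℕ) + 2*r = (0 + g - (j:ℕ) + 2*r) + g from by omega]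
      rw [colF_per m k c hm0 (0 + g - (j:ℕ) + 2*r)]
  refine ⟨VV 0, ?_⟩
  have := hwalk g 0
  rw [show (0:ℕ) + g = g from by omega, hVVg] at this
  rw [show 2*k + 2*c - 1 = g from by omega]
  exact this
theorem fiber_bound (L k : ℕ) (hk : 1 ≤ k) (hL : L % 2 = 1) (hL2k : 2*k + 1 ≤ L) (S : Finset ℕ)
    (hsub : ∀ a ∈ S, a < L)
    (hp : ∀ i j : ℕ, i ∈ S → j ∈ S → i < j →
      ((j - i) % 2 = 1 → 2*k ≤ j - i) ∧ ((L - (j - i)) % 2 = 1 → 2*k ≤ L - (j - i))) :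
    2 * S.card + 2*k ≤ L + 1 := by
  rcases Nat.lt_or_ge S.card 2 with h2 | h2
  · omega
  · set t := S.card with ht
    set f := S.orderEmbOfFin ht.symm with hf
    have hmemS : ∀ a : Fin t, f a ∈ S := fun a => Finset.orderEmbOfFin_mem S ht.symm a
    set F : ℕ → ℕ := fun j => if h : j < t then f ⟨j, h⟩ else 0 with hFdef
    have hF : ∀ j (h : j < t), F j = f ⟨j, h⟩ := fun j h => dif_pos h
    have hFmono : ∀ j, j + 1 < t → F j < F (j+1) := by
      intro j h
      rw [hF j (by omega), hF (j+1) h]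
      exact f.strictMono (Fin.mk_lt_mk.mpr (by omega))
    have hFmem : ∀ j, j < t → F j < L := by
      intro j h
      rw [hF j h]
      exact hsub _ (hmemS ⟨j, h⟩)
    have hFpair : ∀ a b : ℕ, a < b → (hb : b < t) →
        ((F b - F a) % 2 = 1 → 2*k ≤ F b - F a) ∧
        ((L - (F b - F a)) % 2 = 1 → 2*k ≤ L - (F b - F a)) := by
      intro a b hab hb
      rw [hF a (by omega), hF b hb]
      have hlt : f ⟨a, by omega⟩ < f ⟨b, hb⟩ := f.strictMono (Fin.mk_lt_mk.mpr hab)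
      exact hp _ _ (hmemS ⟨a, by omega⟩) (hmemS ⟨b, hb⟩) hlt
    have main : ∀ j, j < t → F 0 + 2*j ≤ F j ∧
        ((F j - F 0) % 2 = 1 → F 0 + 2*j + (2*k-1) ≤ F j) := by
      intro j
      induction j with
      | zero => intro _; omega
      | succ j ih =>
          intro hj
          have IH := ih (by omega)
          have hmono := hFmono j hj
          have hpp := (hFpair j (j+1) (by omega) hj).1
          omega
    have h1 := main (t-1) (by omega)
    have hpp := hFpair 0 (t-1) (by omega) (by omega)
    have hb := hFmem (t-1) (by omega)
    omega

theorem helical_lower (m k c : ℕ) (hm : 3 ≤ m) (hk : 1 ≤ k)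
    (hc2 : (m-2)*c < (2*k-1) + (m-2)) :
    ∀ L, L % 2 = 1 → (∃ v, (helical m 1 k).walkLen L v v) → 2*k + 2*c - 1 ≤ L := by
  intro L hL hv
  obtain ⟨v, hv⟩ := hv
  have hk0 : 0 < k := hk
  -- the distinguished color of a vertex
  have hne : ∀ u : (helical m 1 k).V, (u.1 ⟨0, hk0⟩).Nonempty := fun u =>
    Set.nonempty_of_ncard_ne_zero (by rw [u.2.1 hk0]; exact one_ne_zero)
  set av : (helical m 1 k).V → Fin m := fun u => (hne u).some with hav
  have avmem : ∀ u, av u ∈ u.1 ⟨0, hk0⟩ := fun u => (hne u).some_mem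
  -- colors differ along short odd walks
  have aNe : ∀ (d : ℕ) (u u' : (helical m 1 k).V), d % 2 = 1 → d ≤ 2*k - 1 →
      (helical m 1 k).walkLen d u u' → av u ≠ av u' := by
    intro d u u' hd1 hd2 hw hEq
    set t := d / 2 with ht
    have htk : t < k := by omega
    rw [show d = t + (t + 1) from by omega] at hw
    obtain ⟨w, hw1, hw2⟩ := (helical m 1 k).walkLen_split t (t+1) u u' hw
    obtain ⟨w', hadj, hw3⟩ := hw2
    have h1 : u.1 ⟨0, hk0⟩ ⊆ w.1 ⟨0 + t, by omega⟩ :=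
      helical_chain m k t 0 (by omega) u w hw1
    have hw3' := (helical m 1 k).walkLen_symm t w' u' hw3
    have h2 : u'.1 ⟨0, hk0⟩ ⊆ w'.1 ⟨0 + t, by omega⟩ :=
      helical_chain m k t 0 (by omega) u' w' hw3'
    have hdisj := hadj.1 ⟨0 + t, by omega⟩
    have hmem1 : av u ∈ w.1 ⟨0 + t, by omega⟩ := h1 (avmem u)
    have hmem2 : av u' ∈ w'.1 ⟨0 + t, by omega⟩ := h2 (avmem u')
    rw [hEq] at hmem1
    have hcontr : av u' ∈ w.1 ⟨0 + t, by omega⟩ ∩ w'.1 ⟨0 + t, by omega⟩ := ⟨hmem1, hmem2⟩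
    rw [hdisj] at hcontr
    exact hcontr
  rcases Nat.eq_zero_or_pos c with rfl | hcpos
  · -- c = 0 : need L ≥ 2k - 1
    by_contra hcon
    exact aNe L v v hL (by omega) hv rfl
  obtain ⟨W, hW0, hWL, hadjW⟩ := (helical m 1 k).exists_walk_fun L v v hv
  have hseg := (helical m 1 k).walkLen_of_fun W L hadjW
  have hL2k : 2*k + 1 ≤ L := by
    by_contra hcon
    exact aNe L v v hL (by omega) hv rfl
  set aW : ℕ → Fin m := fun i => av (W i) with haW
  have hpair : ∀ i j : ℕ, i < j → j < L → aW i = aW j →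
      ((j - i) % 2 = 1 → 2*k ≤ j - i) ∧ ((L - (j - i)) % 2 = 1 → 2*k ≤ L - (j - i)) := by
    intro i j hij hjL hEq
    constructor
    · intro hp
      by_contra hcon
      have hw : (helical m 1 k).walkLen (j - i) (W i) (W j) := by
        have := hseg (j - i) i (by omega)
        rw [show i + (j - i) = j from by omega] at this; exact this
      exact aNe (j-i) (W i) (W j) hp (by omega) hw hEq
    · intro hp
      by_contra hcon
      have hw1 : (helical m 1 k).walkLen (L - j) (W j) (W 0) := by
        have := hseg (L - j) j (by omega)
        rw [show j + (L - j) = L from by omega, hWL, ← hW0] at this; exact this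
      have hw2 : (helical m 1 k).walkLen i (W 0) (W i) := by
        have := hseg i 0 (by omega)
        rw [Nat.zero_add] at this; exact this
      have hw3 := (helical m 1 k).walkLen_append (L-j) i (W j) (W 0) (W i) hw1 hw2
      rw [show L - j + i = L - (j - i) from by omega] at hw3
      exact aNe _ (W j) (W i) hp (by omega) hw3 hEq.symm
  -- fiber bound
  have hfib : ∀ x : Fin m,
      2 * ((Finset.range L).filter (fun i => aW i = x)).card + 2*k ≤ L + 1 := by
    intro x
    refine fiber_bound L k hk hL hL2k _ ?_ ?_
    · intro a ha
      exact Finset.mem_range.mp (Finset.mem_filter.mp ha).1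
    · intro i j hi hj hij
      exact hpair i j hij (Finset.mem_range.mp (Finset.mem_filter.mp hj).1)
        ((Finset.mem_filter.mp hi).2.trans (Finset.mem_filter.mp hj).2.symm)
  -- sum over fibers
  have hsum := Finset.card_eq_sum_card_fiberwise
    (f := aW) (s := Finset.range L) (t := Finset.univ) (fun i _ => Finset.mem_univ (aW i))
  rw [Finset.card_range] at hsum
  have hsum2 : ∑ x : Fin m, (2 * ((Finset.range L).filter (fun i => aW i = x)).card + 2*k)
      ≤ ∑ _x : Fin m, (L+1) := Finset.sum_le_sum (fun x _ => hfib x)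
  rw [Finset.sum_add_distrib, ← Finset.mul_sum, ← hsum, Finset.sum_const, Finset.sum_const,
    Finset.card_univ, Fintype.card_fin, smul_eq_mul, smul_eq_mul] at hsum2
  -- hsum2 : 2 * L + m * (2*k) ≤ m * (L+1)
  set Q := L + 1 - 2*k with hQdef
  have hQ : L + 1 = 2*k + Q := by omega
  have h2L : 2*L + m*(2*k) ≤ m*(2*k) + m*Q := by
    have : m*(L+1) = m*(2*k) + m*Q := by rw [hQ, Nat.mul_add]
    omega
  set q' := Q / 2 with hq'def
  have hq' : Q = 2*q' := by omega
  have e2 : (m-2) * Q + 2 * Q = m * Q := by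
    rw [Nat.sub_mul]
    have h2m : 2*Q ≤ m*Q := Nat.mul_le_mul_right Q (by omega)
    omega
  have e4 : (m-2) * Q = 2 * ((m-2) * q') := by rw [hq']; ring
  have hbq : 2*k - 1 ≤ (m-2) * q' := by omega
  have hqc : c ≤ q' := by
    by_contra hcon
    have hmono : (m-2) * q' ≤ (m-2) * (c-1) := Nat.mul_le_mul_left _ (by omega)
    have h5 : (m-2) * c = (m-2) * (c-1) + (m-2) * 1 := by rw [← Nat.mul_add]; congr 1; omega
    omega
  omega
/-- For `m ≥ 3`, `k ≥ 1`, the odd girth of `H(m,1,k)` equals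
`2k + 2⌈(2k-1)/(m-2)⌉ - 1`. -/
theorem oddGirth_helical (m k : ℕ) (hm : 3 ≤ m) (hk : 1 ≤ k) :
    (helical m 1 k).oddGirth =
      ((2 * k + 2 * (⌈(2 * (k : ℚ) - 1) / ((m : ℚ) - 2)⌉).toNat - 1 : ℕ) : ℕ∞) := by
  set c := (2*k - 1 + (m-2) - 1) / (m-2) with hcdef
  have hdm := Nat.div_add_mod (2*k - 1 + (m-2) - 1) (m-2)
  have hmlt : (2*k - 1 + (m-2) - 1) % (m-2) < m-2 := Nat.mod_lt _ (by omega)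
  rw [← hcdef] at hdm
  have hc1 : 2*k - 1 ≤ (m-2)*c := by omega
  have hc2 : (m-2)*c < (2*k-1) + (m-2) := by omega
  have hc : 1 ≤ c := by
    rcases Nat.eq_zero_or_pos c with h0 | h
    · rw [h0, Nat.mul_zero] at hc1; omega
    · exact h
  -- identify the ceiling with c
  have hbq : (0:ℚ) < (m:ℚ) - 2 := by
    have h3 : (3:ℚ) ≤ (m:ℚ) := by exact_mod_cast hm
    linarith
  have cast1 : ((2*k - 1 : ℕ) : ℚ) = 2*(k:ℚ) - 1 := by
    rw [Nat.cast_sub (by omega : 1 ≤ 2*k)]; push_cast; ring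
  have cast2 : ((m - 2 : ℕ) : ℚ) = (m:ℚ) - 2 := by
    rw [Nat.cast_sub (by omega : 2 ≤ m)]; push_cast; ring
  have hq1 : 2*(k:ℚ) - 1 ≤ ((m:ℚ) - 2) * c := by
    have := (Nat.cast_le (α := ℚ)).mpr hc1
    rw [Nat.cast_mul, cast1, cast2] at this
    exact this
  have hq2 : ((m:ℚ) - 2) * c < (2*(k:ℚ) - 1) + ((m:ℚ) - 2) := by
    have := (Nat.cast_lt (α := ℚ)).mpr hc2
    rw [Nat.cast_mul, Nat.cast_add, cast1, cast2] at this
    exact this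
  have hceil : ⌈(2 * (k : ℚ) - 1) / ((m : ℚ) - 2)⌉ = (c : ℤ) := by
    rw [Int.ceil_eq_iff]
    push_cast
    constructor
    · rw [lt_div_iff₀ hbq]
      nlinarith
    · rw [div_le_iff₀ hbq]
      nlinarith
  rw [hceil, Int.toNat_natCast]
  rw [OGraph.oddGirth]
  apply le_antisymm
  · exact sInf_le ⟨2*k + 2*c - 1, rfl, by rw [Nat.odd_iff]; omega,
      helical_upper m k c hm hk hc hc1⟩
  · apply le_sInf
    rintro N ⟨n, rfl, hodd, hwalk⟩
    exact Nat.cast_le.mpr (helical_lower m k c hm hk hc2 n (Nat.odd_iff.mp hodd) hwalk)
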